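/- With ℙ₀ as above (pushforward under Θ of the Bernoulli measure with marginals 2^{-a} on (ℕ₊)^ℕ): ℙ₀([1^{n+1}]₀ | [1^n]₀) ≤ 2^{-(n+1)} for every n ≥ 1, and hence lim_n ℙ₀([1^{n+1}]₀ | [1^n]₀) = 0. -/

import Mathlib

open MeasureTheory Filter Topology
open scoped BigOperators

instance : MeasurableSpace ℕ+ := ⊤

instance : MeasurableSingletonClass ℕ+ :=
  ⟨fun _ => MeasurableSpace.measurableSet_top⟩

/-- `θ(a₁, a₂) = 1` iff `a₂ = a₁ + 1`. -/
def theta (a₁ a₂ : ℕ+) : Bool := a₂ = a₁ + 1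

/-- `(Θω)_j = θ(ω_j, ω_{j+1})`. -/
def Theta (ω : ℕ → ℕ+) : ℕ → Bool := fun j => theta (ω j) (ω (j + 1))

def pa (a : ℕ+) (i : ℕ) : ℕ+ := ⟨a + i, Nat.lt_of_lt_of_le a.pos (Nat.le_add_right _ _)⟩

lemma pa_coe (a : ℕ+) (i : ℕ) : ((pa a i : ℕ+) : ℕ) = a + i := rfl

lemma pa_zero (a : ℕ+) : pa a 0 = a := by
  apply PNat.coe_injective; simp [pa_coe]

lemma pa_succ (a : ℕ+) (i : ℕ) : pa a (i+1) = pa a i + 1 := by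
  apply PNat.coe_injective; simp [pa_coe]; ring

lemma theta_true_iff (a₁ a₂ : ℕ+) : theta a₁ a₂ = true ↔ a₂ = a₁ + 1 := by
  simp [theta]

lemma measurable_Theta : Measurable Theta := by
  rw [measurable_pi_iff]
  intro j
  apply measurable_to_countable'
  intro y
  have key : (fun ω : ℕ → ℕ+ => Theta ω j) ⁻¹' {true}
      = ⋃ a : ℕ+, ((fun ω : ℕ → ℕ+ => ω j) ⁻¹' {a} ∩ (fun ω : ℕ → ℕ+ => ω (j+1)) ⁻¹' {a+1}) := by
    ext ω
    simp only [Set.mem_preimage, Set.mem_singleton_iff, Set.mem_iUnion, Set.mem_inter_iff,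
      Theta, theta_true_iff]
    constructor
    · intro h; exact ⟨ω j, rfl, h⟩
    · rintro ⟨a, rfl, h⟩; exact h
  have hmeas : MeasurableSet ((fun ω : ℕ → ℕ+ => Theta ω j) ⁻¹' {true}) := by
    rw [key]
    exact MeasurableSet.iUnion fun a =>
      ((measurable_pi_apply j (measurableSet_singleton a)).inter
        (measurable_pi_apply (j+1) (measurableSet_singleton (a+1))))
  cases y with
  | true => exact hmeas
  | false =>
    have : (fun ω : ℕ → ℕ+ => Theta ω j) ⁻¹' {false}
        = ((fun ω : ℕ → ℕ+ => Theta ω j) ⁻¹' {true})ᶜ := by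
      ext ω; simp
    rw [this]; exact hmeas.compl

lemma cyl_measurable (n : ℕ) : MeasurableSet {γ : ℕ → Bool | ∀ j < n, γ j = true} := by
  have : {γ : ℕ → Bool | ∀ j < n, γ j = true}
      = ⋂ j ∈ Set.Iio n, (fun γ : ℕ → Bool => γ j) ⁻¹' {true} := by
    ext γ; simp
  rw [this]
  exact MeasurableSet.biInter (Set.to_countable _)
    (fun j _ => measurable_pi_apply j (measurableSet_singleton true))

lemma preimage_eq (n : ℕ) :
    Theta ⁻¹' {γ : ℕ → Bool | ∀ j < n, γ j = true}
      = ⋃ a : ℕ+, {ω : ℕ → ℕ+ | ∀ i < n + 1, ω i = pa a i} := by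
  ext ω
  simp only [Set.mem_preimage, Set.mem_setOf_eq, Set.mem_iUnion, Theta, theta_true_iff]
  constructor
  · intro h
    refine ⟨ω 0, ?_⟩
    intro i hi
    induction i with
    | zero => simp [pa_zero]
    | succ k ih =>
      have hk : k < n := Nat.lt_of_succ_lt_succ hi
      rw [h k hk, ih (Nat.lt_of_succ_lt hi), pa_succ]
  · rintro ⟨a, ha⟩
    intro j hj
    rw [ha (j+1) (Nat.succ_lt_succ hj), ha j (Nat.lt_succ_of_lt hj), pa_succ]

lemma cylset_measurable (a : ℕ+) (n : ℕ) :
    MeasurableSet {ω : ℕ → ℕ+ | ∀ i < n + 1, ω i = pa a i} := by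
  have : {ω : ℕ → ℕ+ | ∀ i < n + 1, ω i = pa a i}
      = ⋂ i ∈ Set.Iio (n+1), (fun ω : ℕ → ℕ+ => ω i) ⁻¹' {pa a i} := by
    ext ω; simp
  rw [this]
  exact MeasurableSet.biInter (Set.to_countable _)
    (fun i _ => measurable_pi_apply i (measurableSet_singleton _))

lemma map_cyl (ℙ : Measure (ℕ → ℕ+)) [IsProbabilityMeasure ℙ]
    (hbern : ∀ (n : ℕ) (w : ℕ → ℕ+),
      ℙ {ω | ∀ i < n, ω i = w i} = ∏ i ∈ Finset.range n, (2 : ENNReal)⁻¹ ^ (w i : ℕ))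
    (n : ℕ) :
    ℙ.map Theta {γ | ∀ j < n, γ j = true}
      = ∑' a : ℕ+, ∏ i ∈ Finset.range (n+1), (2 : ENNReal)⁻¹ ^ ((a : ℕ) + i) := by
  rw [Measure.map_apply measurable_Theta (cyl_measurable n), preimage_eq]
  rw [measure_iUnion ?_ (fun a => cylset_measurable a n)]
  · congr 1
    ext a
    rw [hbern (n+1) (pa a)]
    exact Finset.prod_congr rfl (fun i _ => by rw [pa_coe])
  · intro a b hab
    simp only [Function.onFun, Set.disjoint_left]
    intro ω ha hb
    apply hab
    have h1 := ha 0 (Nat.succ_pos n)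
    have h2 := hb 0 (Nat.succ_pos n)
    rw [← pa_zero a, ← h1, h2, pa_zero]

/-- with `ℙ₀ = ℙ∘Θ⁻¹` as above,
`ℙ₀([1^{n+1}]₀ | [1^n]₀) ≤ 2^{-(n+1)}` for every `n ≥ 1`, hence the conditional
probabilities tend to `0`. -/
theorem Theta_pushforward_conditional_tendsto_zero
    (ℙ : Measure (ℕ → ℕ+)) [IsProbabilityMeasure ℙ]
    (hbern : ∀ (n : ℕ) (w : ℕ → ℕ+),
      ℙ {ω | ∀ i < n, ω i = w i} = ∏ i ∈ Finset.range n, (2 : ENNReal)⁻¹ ^ (w i : ℕ))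
    (ratio : ℕ → ℝ)
    (hratio : ∀ n, ratio n =
      (ℙ.map Theta {γ | ∀ j < n + 1, γ j = true}).toReal /
        (ℙ.map Theta {γ | ∀ j < n, γ j = true}).toReal) :
    (∀ n, 1 ≤ n → ratio n ≤ (2 : ℝ)⁻¹ ^ (n + 1)) ∧
    Tendsto ratio atTop (𝓝 0) := by
  haveI : IsProbabilityMeasure (ℙ.map Theta) :=
    Measure.isProbabilityMeasure_map measurable_Theta.aemeasurable
  set P : ℕ → ENNReal := fun n => ℙ.map Theta {γ | ∀ j < n, γ j = true} with hP
  have hPfin : ∀ n, P n ≠ ⊤ := fun n => measure_ne_top _ _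
  have key : ∀ n, P (n+1) ≤ (2 : ENNReal)⁻¹ ^ (n + 2) * P n := by
    intro n
    rw [hP]
    simp only
    rw [map_cyl ℙ hbern, map_cyl ℙ hbern, ← ENNReal.tsum_mul_left]
    apply ENNReal.tsum_le_tsum
    intro a
    rw [Finset.prod_range_succ, mul_comm ((2:ENNReal)⁻¹ ^ (n+2))]
    have h1 : n + 2 ≤ (a : ℕ) + (n + 1) := by
      have := a.pos; omega
    exact mul_le_mul_right
      (pow_le_pow_right_of_le_one' (a := (2:ENNReal)⁻¹) (by norm_num [ENNReal.inv_le_one]) h1) _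
  have hbound : ∀ n, ratio n ≤ (2 : ℝ)⁻¹ ^ (n + 1) := by
    intro n
    have hkey := key n
    have hkey' : P (n+1) ≤ (2 : ENNReal)⁻¹ ^ (n + 1) * P n := by
      refine hkey.trans ?_
      exact mul_le_mul_left
        (pow_le_pow_right_of_le_one' (a := (2:ENNReal)⁻¹) (by norm_num [ENNReal.inv_le_one]) (by omega)) _
    have hreal : (P (n+1)).toReal ≤ (2 : ℝ)⁻¹ ^ (n + 1) * (P n).toReal := by
      have := ENNReal.toReal_mono (by
        exact ENNReal.mul_ne_top (by simp) (hPfin n)) hkey'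
      rwa [ENNReal.toReal_mul, ENNReal.toReal_pow, ENNReal.toReal_inv,
        ENNReal.toReal_ofNat] at this
    rw [hratio n]
    rcases eq_or_lt_of_le (ENNReal.toReal_nonneg : (0:ℝ) ≤ (P n).toReal) with h0 | h0
    · rw [← h0, div_zero]
      positivity
    · rw [div_le_iff₀ h0]
      exact hreal
  refine ⟨fun n _ => hbound n, ?_⟩
  apply squeeze_zero' (Filter.Eventually.of_forall ?_) (Filter.Eventually.of_forall hbound) ?_
  · intro n
    rw [hratio n]
    exact div_nonneg ENNReal.toReal_nonneg ENNReal.toReal_nonneg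
  · have h1 : Tendsto (fun n : ℕ => (2 : ℝ)⁻¹ ^ n) atTop (𝓝 0) :=
      tendsto_pow_atTop_nhds_zero_of_lt_one (by norm_num) (by norm_num)
    exact h1.comp (tendsto_add_atTop_nat 1)
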